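/- Let U be a unitary matrix. For any ε > 0 there exists an integer n > 0 such that for all vectors x with ‖x‖² ≤ 1, ‖(I - Uⁿ)x‖² < ε. -/

import Mathlib

open Matrix Finset

/-- Squared Frobenius norm. -/
noncomputable def frobSq {m : ℕ} (A : Matrix (Fin m) (Fin m) ℂ) : ℝ :=
  ∑ i, ∑ j, ‖A i j‖ ^ 2

lemma frobSq_nonneg {m : ℕ} (A : Matrix (Fin m) (Fin m) ℂ) : 0 ≤ frobSq A := by
  unfold frobSq; positivity

lemma ofReal_normSq_eq (z : ℂ) : ((‖z‖ ^ 2 : ℝ) : ℂ) = star z * z := by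
  rw [Complex.star_def, ← Complex.normSq_eq_conj_mul_self, Complex.normSq_eq_norm_sq]

lemma ofReal_normSq_eq' (z : ℂ) : ((‖z‖ ^ 2 : ℝ) : ℂ) = z * star z := by
  rw [Complex.star_def, Complex.mul_conj, Complex.normSq_eq_norm_sq]

lemma sum_normSq_eq (m : ℕ) (v : Fin m → ℂ) :
    ((∑ i, ‖v i‖ ^ 2 : ℝ) : ℂ) = star v ⬝ᵥ v := by
  push_cast
  simp only [dotProduct, Pi.star_apply]
  refine Finset.sum_congr rfl fun i _ => ?_
  have := ofReal_normSq_eq (v i)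
  push_cast at this
  exact this

lemma mulVec_norm_sum {m : ℕ} {V : Matrix (Fin m) (Fin m) ℂ}
    (hV : V ∈ Matrix.unitaryGroup (Fin m) ℂ) (y : Fin m → ℂ) :
    ∑ i, ‖(V.mulVec y) i‖ ^ 2 = ∑ i, ‖y i‖ ^ 2 := by
  have h1 : Vᴴ * V = 1 := by
    have := hV.1
    rwa [Matrix.star_eq_conjTranspose] at this
  apply Complex.ofReal_injective
  rw [sum_normSq_eq, sum_normSq_eq, star_mulVec, dotProduct_mulVec, vecMul_vecMul, h1,
    vecMul_one]

lemma frobSq_unitary_mul {m : ℕ} {V : Matrix (Fin m) (Fin m) ℂ}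
    (hV : V ∈ Matrix.unitaryGroup (Fin m) ℂ) (B : Matrix (Fin m) (Fin m) ℂ) :
    frobSq (V * B) = frobSq B := by
  unfold frobSq
  rw [Finset.sum_comm]
  conv_rhs => rw [Finset.sum_comm]
  refine Finset.sum_congr rfl fun j _ => ?_
  have hcol : ∀ i, (V * B) i j = (V.mulVec fun k => B k j) i := fun i => by
    simp [Matrix.mul_apply, Matrix.mulVec, dotProduct]
  simp_rw [hcol]
  exact mulVec_norm_sum hV _

lemma entry_norm_le_one {m : ℕ} {V : Matrix (Fin m) (Fin m) ℂ}
    (hV : V ∈ Matrix.unitaryGroup (Fin m) ℂ) (i j : Fin m) : ‖V i j‖ ≤ 1 := by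
  have h2 : V * star V = 1 := hV.2
  have hrow : ∑ k, ‖V i k‖ ^ 2 = 1 := by
    have h := congrFun (congrFun h2 i) i
    rw [Matrix.mul_apply] at h
    apply Complex.ofReal_injective
    push_cast
    rw [show (1:ℂ) = (1 : Matrix (Fin m) (Fin m) ℂ) i i by simp [Matrix.one_apply_eq], ← h]
    refine Finset.sum_congr rfl fun k _ => ?_
    have := ofReal_normSq_eq' (V i k)
    push_cast at this
    rw [this, Matrix.star_apply]
  have hle : ‖V i j‖ ^ 2 ≤ 1 := by
    rw [← hrow]
    exact Finset.single_le_sum (f := fun k => ‖V i k‖ ^ 2) (fun k _ => by positivity)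
      (Finset.mem_univ j)
  nlinarith [norm_nonneg (V i j)]

theorem unitary_power_close_to_id (m : ℕ) (U : Matrix (Fin m) (Fin m) ℂ)
    (hU : U ∈ Matrix.unitaryGroup (Fin m) ℂ) (ε : ℝ) (hε : 0 < ε) :
    ∃ n : ℕ, 0 < n ∧ ∀ x : Fin m → ℂ, (∑ i, ‖x i‖ ^ 2) ≤ 1 →
      (∑ i, ‖((1 - U ^ n).mulVec x) i‖ ^ 2) < ε := by
  classical
  set g : ℕ → (Fin m → Fin m → ℂ) := fun k i j => (U ^ k) i j with hg
  have hgball : ∀ k, g k ∈ Metric.closedBall (0 : Fin m → Fin m → ℂ) 1 := by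
    intro k
    rw [Metric.mem_closedBall, dist_zero_right]
    refine (pi_norm_le_iff_of_nonneg zero_le_one).2 fun i => ?_
    refine (pi_norm_le_iff_of_nonneg zero_le_one).2 fun j => ?_
    exact entry_norm_le_one (pow_mem hU k) i j
  obtain ⟨a, -, φ, hφ, hconv⟩ :=
    (isCompact_closedBall (0 : Fin m → Fin m → ℂ) 1).tendsto_subseq hgball
  have hcauchy : CauchySeq (g ∘ φ) := hconv.cauchySeq
  set δ : ℝ := Real.sqrt ε / (m + 1) with hδ
  have hδpos : 0 < δ := div_pos (Real.sqrt_pos.2 hε) (by positivity)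
  obtain ⟨N, hN⟩ := Metric.cauchySeq_iff'.1 hcauchy δ hδpos
  have hdist : dist (g (φ (N + 1))) (g (φ N)) < δ := hN (N + 1) (Nat.le_succ N)
  set k := φ N with hk
  set l := φ (N + 1) with hl
  have hkl : k < l := hφ (Nat.lt_succ_self N)
  refine ⟨l - k, Nat.sub_pos_of_lt hkl, ?_⟩
  have hent : ∀ i j, ‖(U ^ l - U ^ k) i j‖ ≤ δ := by
    intro i j
    have h1 : dist (g l i) (g k i) ≤ dist (g l) (g k) := dist_le_pi_dist (g l) (g k) i
    have h2 : dist (g l i j) (g k i j) ≤ dist (g l i) (g k i) := dist_le_pi_dist (g l i) (g k i) j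
    have : dist (g l i j) (g k i j) < δ := lt_of_le_of_lt (h2.trans h1) hdist
    simpa [dist_eq_norm, hg, Matrix.sub_apply] using this.le
  have hfrob : frobSq (1 - U ^ (l - k)) < ε := by
    have heq : U ^ k * (1 - U ^ (l - k)) = U ^ k - U ^ l := by
      rw [mul_sub, mul_one, ← pow_add, Nat.add_sub_cancel' hkl.le]
    have h1 : frobSq (1 - U ^ (l - k)) = frobSq (U ^ k - U ^ l) := by
      rw [← heq, frobSq_unitary_mul (pow_mem hU k)]
    have h1' : frobSq (U ^ k - U ^ l) = frobSq (U ^ l - U ^ k) := by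
      unfold frobSq
      refine Finset.sum_congr rfl fun i _ => Finset.sum_congr rfl fun j _ => ?_
      rw [show U ^ k - U ^ l = -(U ^ l - U ^ k) from (neg_sub _ _).symm, Matrix.neg_apply,
        norm_neg]
    have hbound : frobSq (U ^ l - U ^ k) ≤ (m : ℝ) ^ 2 * δ ^ 2 := by
      unfold frobSq
      calc ∑ i, ∑ j, ‖(U ^ l - U ^ k) i j‖ ^ 2
          ≤ ∑ _i : Fin m, ∑ _j : Fin m, δ ^ 2 := by
            refine Finset.sum_le_sum fun i _ => Finset.sum_le_sum fun j _ => ?_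
            exact pow_le_pow_left₀ (norm_nonneg _) (hent i j) 2
        _ = (m : ℝ) ^ 2 * δ ^ 2 := by
            simp [Finset.sum_const, Finset.card_univ]
            ring
    have hδsq : δ ^ 2 = ε / ((m : ℝ) + 1) ^ 2 := by
      rw [hδ, div_pow, Real.sq_sqrt hε.le]
    have hfinal : (m : ℝ) ^ 2 * δ ^ 2 < ε := by
      rw [hδsq]
      have hc : (0:ℝ) < ((m : ℝ) + 1) ^ 2 := by positivity
      rw [mul_div_assoc', div_lt_iff₀ hc]
      have hmnn : (0:ℝ) ≤ (m : ℝ) := Nat.cast_nonneg m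
      nlinarith
    rw [h1, h1']
    exact lt_of_le_of_lt hbound hfinal
  intro x hx
  set A := (1 : Matrix (Fin m) (Fin m) ℂ) - U ^ (l - k) with hA
  have hCS : (∑ i, ‖(A.mulVec x) i‖ ^ 2) ≤ frobSq A * ∑ i, ‖x i‖ ^ 2 := by
    unfold frobSq
    rw [Finset.sum_mul]
    refine Finset.sum_le_sum fun i _ => ?_
    have h1 : ‖(A.mulVec x) i‖ ≤ ∑ j, ‖A i j‖ * ‖x j‖ := by
      rw [show (A.mulVec x) i = ∑ j, A i j * x j by simp [Matrix.mulVec, dotProduct]]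
      refine le_trans (norm_sum_le _ _) ?_
      exact Finset.sum_le_sum fun j _ => (norm_mul _ _).le
    have h2 : (∑ j, ‖A i j‖ * ‖x j‖) ^ 2 ≤ (∑ j, ‖A i j‖ ^ 2) * ∑ j, ‖x j‖ ^ 2 :=
      Finset.sum_mul_sq_le_sq_mul_sq _ _ _
    calc ‖(A.mulVec x) i‖ ^ 2 ≤ (∑ j, ‖A i j‖ * ‖x j‖) ^ 2 :=
          pow_le_pow_left₀ (norm_nonneg _) h1 2
      _ ≤ (∑ j, ‖A i j‖ ^ 2) * ∑ j, ‖x j‖ ^ 2 := h2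
  have hsum : (∑ i, ‖(A.mulVec x) i‖ ^ 2) ≤ frobSq A :=
    hCS.trans (by
      have := mul_le_of_le_one_right (frobSq_nonneg A) hx
      linarith)
  exact lt_of_le_of_lt hsum hfrob
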